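/- For m ≥ 2, the bracket on the (2m+5)-dimensional vector space with basis h, g₀, g₁, g₂, ε₁, …, ε_{2m}, η defined by: [g₁,g₂]=2g₂, [g₁,h]=−2h, [g₂,h]=g₁, [g₀,h]=[g₀,g₁]=[g₀,g₂]=0, [h,ε_i]=ε_{i+1} for 1≤i≤2m−1, [h,ε_{2m}]=0, [ε_i,ε_{2m−i+1}]=(−1)^{i+1}η, [ε_i,ε_j]=0 for i+j≠2m+1, [g₁,ε_i]=(2m−2i+1)ε_i, [g₂,ε_i]=(i−1)(2m+1−i)ε_{i−1}, [g₀,ε_i]=−ε_i, [g₀,η]=−2η, [g₁,η]=[g₂,η]=[h,η]=[ε_i,η]=0, satisfies the Jacobi identity, and the resulting Lie algebra is a semidirect sum of 𝔤𝔩(2,ℝ) (spanned by h, g₀, g₁, g₂) acting on the Heisenberg algebra 𝔫_{2m+1} (spanned by ε₁,…,ε_{2m}, η). -/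

import Mathlib

/-- The bracket on the `(2m+5)`-dimensional space with basis `h, g₀, g₁, g₂, ε₁, …, ε_{2m}, η`.
Coordinates: `v.1 0, v.1 1, v.1 2, v.1 3` are the coefficients of `h, g₀, g₁, g₂`
respectively, `v.2.1 i` is the coefficient of `ε_{i+1}`, and `v.2.2` that of `η`.
The structure constants are:
`[g₁,g₂]=2g₂, [g₁,h]=−2h, [g₂,h]=g₁, [g₀,·]=0` on `h,g₁,g₂`;
`[h,ε_i]=ε_{i+1}` (`[h,ε_{2m}]=0`), `[g₁,ε_i]=(2m−2i+1)ε_i`,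
`[g₂,ε_i]=(i−1)(2m+1−i)ε_{i−1}`, `[g₀,ε_i]=−ε_i`;
`[ε_i,ε_{2m+1−i}]=(−1)^{i+1}η`, `[g₀,η]=−2η`, and `η` commutes with `h,g₁,g₂,ε_i`. -/
def glHeisBr (m : ℕ) (v w : (Fin 4 → ℝ) × (Fin (2 * m) → ℝ) × ℝ) :
    (Fin 4 → ℝ) × (Fin (2 * m) → ℝ) × ℝ :=
  (![-2 * (v.1 2 * w.1 0 - v.1 0 * w.1 2), 0,
      v.1 3 * w.1 0 - v.1 0 * w.1 3,
      2 * (v.1 2 * w.1 3 - v.1 3 * w.1 2)],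
   fun k =>
     (if 1 ≤ k.1 then
        v.1 0 * w.2.1 ⟨k.1 - 1, Nat.lt_of_le_of_lt (Nat.sub_le _ _) k.isLt⟩
          - w.1 0 * v.2.1 ⟨k.1 - 1, Nat.lt_of_le_of_lt (Nat.sub_le _ _) k.isLt⟩
      else 0)
     + ((2 * m : ℝ) - 2 * k.1 - 1) * (v.1 2 * w.2.1 k - w.1 2 * v.2.1 k)
     + (if hk : k.1 + 1 < 2 * m then
          ((k.1 + 1 : ℝ) * ((2 * m : ℝ) - 1 - k.1)) *
            (v.1 3 * w.2.1 ⟨k.1 + 1, hk⟩ - w.1 3 * v.2.1 ⟨k.1 + 1, hk⟩)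
        else 0)
     - (v.1 1 * w.2.1 k - w.1 1 * v.2.1 k),
   (∑ i : Fin (2 * m), (-1 : ℝ) ^ (i : ℕ) * v.2.1 i * w.2.1 i.rev)
     - 2 * (v.1 1 * w.2.2 - w.1 1 * v.2.2))

/-- Extension of a `Fin n`-indexed vector to `ℕ`, using 1-based positions. -/
def Eext (n : ℕ) (x : Fin n → ℝ) (j : ℕ) : ℝ :=
  if h : 1 ≤ j ∧ j ≤ n then x ⟨j - 1, by omega⟩ else 0

lemma Eext_zero (n : ℕ) (x : Fin n → ℝ) : Eext n x 0 = 0 := by simp [Eext]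

lemma Eext_large (n : ℕ) (x : Fin n → ℝ) {j : ℕ} (h : n < j) : Eext n x j = 0 := by
  rw [Eext, dif_neg]; omega

lemma Eext_pos {n : ℕ} (x : Fin n → ℝ) (k : Fin n) : Eext n x (k.1 + 1) = x k := by
  rw [Eext, dif_pos ⟨by omega, k.isLt⟩]
  simp

/-- The action of the `𝔤𝔩₂` part on the `ε` part. -/
def Aop (m : ℕ) (a : Fin 4 → ℝ) (x : Fin (2 * m) → ℝ) : Fin (2 * m) → ℝ := fun k =>
  (if 1 ≤ k.1 then a 0 * x ⟨k.1 - 1, Nat.lt_of_le_of_lt (Nat.sub_le _ _) k.isLt⟩ else 0)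
  + ((2 * m : ℝ) - 2 * k.1 - 1) * (a 2 * x k)
  + (if hk : k.1 + 1 < 2 * m then
      ((k.1 + 1 : ℝ) * ((2 * m : ℝ) - 1 - k.1)) * (a 3 * x ⟨k.1 + 1, hk⟩) else 0)
  - a 1 * x k

/-- The symplectic-type pairing giving the `η`-component. -/
abbrev Sfm (m : ℕ) (x y : Fin (2 * m) → ℝ) : ℝ :=
  ∑ i : Fin (2 * m), (-1 : ℝ) ^ (i : ℕ) * x i * y i.rev

lemma Eext_Aop (m : ℕ) (a : Fin 4 → ℝ) (x : Fin (2 * m) → ℝ) (j : ℕ) :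
    Eext (2 * m) (Aop m a x) j
      = (if j ≤ 2 * m then a 0 * Eext (2 * m) x (j - 1) else 0)
        + ((2 * m : ℝ) - 2 * j + 1) * (a 2 * Eext (2 * m) x j)
        + ((j : ℝ) * ((2 * m : ℝ) - (j : ℝ))) * (a 3 * Eext (2 * m) x (j + 1))
        - a 1 * Eext (2 * m) x j := by
  rcases Nat.eq_zero_or_pos j with rfl | hj1
  · simp [Eext_zero]
  rcases le_or_gt j (2 * m) with hj | hj
  · obtain ⟨i, rfl⟩ : ∃ i, j = i + 1 := ⟨j - 1, by omega⟩
    have hi : i < 2 * m := by omega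
    rw [show Eext (2 * m) (Aop m a x) (i + 1) = Aop m a x ⟨i, hi⟩ from Eext_pos _ ⟨i, hi⟩,
        if_pos hj]
    simp only [Aop, Eext, Nat.add_sub_cancel, show ∀ t : ℕ, t + 2 - 1 = t + 1 from fun _ => rfl,
      show ∀ t : ℕ, t + 1 + 1 = t + 2 from fun _ => rfl]
    split_ifs <;> first
      | omega
      | (push_cast; ring)
  · rw [Eext_large _ _ hj, Eext_large _ _ hj, Eext_large _ _ (show 2 * m < j + 1 by omega), if_neg (by omega)]
    ring

lemma Sfm_eq_range (m : ℕ) (x y : Fin (2 * m) → ℝ) :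
    Sfm m x y = ∑ j ∈ Finset.range (2 * m),
      (-1 : ℝ) ^ j * (Eext (2 * m) x (j + 1) * Eext (2 * m) y (2 * m - j)) := by
  rw [← Fin.sum_univ_eq_sum_range
    (fun j => (-1 : ℝ) ^ j * (Eext (2 * m) x (j + 1) * Eext (2 * m) y (2 * m - j))) (2 * m)]
  refine Finset.sum_congr rfl fun i _ => ?_
  rw [Eext_pos x i, show Eext (2 * m) y (2 * m - (i : ℕ)) = y i.rev from ?_]
  · ring
  · rw [Eext, dif_pos ⟨by omega, Nat.sub_le _ _⟩]
    exact congrArg y (Fin.ext (by simp [Fin.val_rev]; omega))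

lemma S_antisym (m : ℕ) (x y : Fin (2 * m) → ℝ) : Sfm m x y = - Sfm m y x := by
  have hr := Finset.sum_range_reflect
    (fun j => (-1 : ℝ) ^ j * (Eext (2 * m) y (j + 1) * Eext (2 * m) x (2 * m - j))) (2 * m)
  rw [Sfm_eq_range, Sfm_eq_range, ← hr, ← Finset.sum_neg_distrib]
  refine Finset.sum_congr rfl fun j hj => ?_
  rw [Finset.mem_range] at hj
  rw [show 2 * m - 1 - j + 1 = 2 * m - j by omega, show 2 * m - (2 * m - 1 - j) = j + 1 by omega]
  have hs : (-1 : ℝ) ^ (2 * m - 1 - j) = -(-1 : ℝ) ^ j := by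
    rcases Nat.even_or_odd j with hp | hp
    · have h1 : Odd (2 * m - 1 - j) := by rw [Nat.odd_iff]; rw [Nat.even_iff] at hp; omega
      rw [h1.neg_one_pow, hp.neg_one_pow]
    · have h1 : Even (2 * m - 1 - j) := by rw [Nat.even_iff]; rw [Nat.odd_iff] at hp; omega
      rw [h1.neg_one_pow, hp.neg_one_pow]; norm_num
  rw [hs]; ring

/-- telescoping function for the `h`-part of the invariance identity -/
def gt1 (m : ℕ) (x y : Fin (2 * m) → ℝ) (j : ℕ) : ℝ :=
  (-1 : ℝ) ^ j * (Eext (2 * m) x j * Eext (2 * m) y (2 * m - j))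

/-- telescoping function for the `g₂`-part of the invariance identity -/
def ht1 (m : ℕ) (x y : Fin (2 * m) → ℝ) (j : ℕ) : ℝ :=
  (-1 : ℝ) ^ j * ((j : ℝ) * (2 * (m : ℝ) - (j : ℝ)))
    * (Eext (2 * m) x (j + 1) * Eext (2 * m) y (2 * m - j + 1))

lemma S_inv (m : ℕ) (a : Fin 4 → ℝ) (x y : Fin (2 * m) → ℝ) :
    Sfm m (Aop m a x) y + Sfm m x (Aop m a y) = -2 * a 1 * Sfm m x y := by
  have key : ∀ j ∈ Finset.range (2 * m),
      (-1 : ℝ) ^ j * (Eext (2 * m) (Aop m a x) (j + 1) * Eext (2 * m) y (2 * m - j))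
        + (-1 : ℝ) ^ j * (Eext (2 * m) x (j + 1) * Eext (2 * m) (Aop m a y) (2 * m - j))
        + 2 * a 1 * ((-1 : ℝ) ^ j * (Eext (2 * m) x (j + 1) * Eext (2 * m) y (2 * m - j)))
      = a 0 * (gt1 m x y j - gt1 m x y (j + 1)) + a 3 * (ht1 m x y j - ht1 m x y (j + 1)) := by
    intro j hj
    rw [Finset.mem_range] at hj
    rw [Eext_Aop, Eext_Aop, if_pos (show j + 1 ≤ 2 * m by omega), if_pos (Nat.sub_le _ _)]
    simp only [gt1, ht1, Nat.add_sub_cancel, Nat.sub_sub]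
    rw [show ((2 * m - j : ℕ) : ℝ) = 2 * (m : ℝ) - (j : ℝ) by
          rw [Nat.cast_sub (by omega)]; push_cast; ring,
        show 2 * m - (j + 1) + 1 = 2 * m - j by omega]
    push_cast
    ring
  have main : ∑ j ∈ Finset.range (2 * m),
      ((-1 : ℝ) ^ j * (Eext (2 * m) (Aop m a x) (j + 1) * Eext (2 * m) y (2 * m - j))
        + (-1 : ℝ) ^ j * (Eext (2 * m) x (j + 1) * Eext (2 * m) (Aop m a y) (2 * m - j))
        + 2 * a 1 * ((-1 : ℝ) ^ j * (Eext (2 * m) x (j + 1) * Eext (2 * m) y (2 * m - j)))) = 0 := by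
    rw [Finset.sum_congr rfl key, Finset.sum_add_distrib, ← Finset.mul_sum, ← Finset.mul_sum,
      Finset.sum_range_sub' (gt1 m x y), Finset.sum_range_sub' (ht1 m x y)]
    have h1 : gt1 m x y 0 = 0 := by simp [gt1, Eext_zero]
    have h2 : gt1 m x y (2 * m) = 0 := by simp [gt1, Nat.sub_self, Eext_zero]
    have h3 : ht1 m x y 0 = 0 := by simp [ht1]
    have h4 : ht1 m x y (2 * m) = 0 := by
      have : ((2 * m : ℕ) : ℝ) = 2 * (m : ℝ) := by push_cast; ring
      simp [ht1, this]
    rw [h1, h2, h3, h4]; ring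
  rw [Finset.sum_add_distrib, Finset.sum_add_distrib, ← Finset.mul_sum] at main
  rw [Sfm_eq_range, Sfm_eq_range, Sfm_eq_range]
  linear_combination main

lemma br_snd (m : ℕ) (v w : (Fin 4 → ℝ) × (Fin (2 * m) → ℝ) × ℝ) :
    (glHeisBr m v w).2.1 = Aop m v.1 w.2.1 - Aop m w.1 v.2.1 := by
  funext k
  simp only [glHeisBr, Aop, Pi.sub_apply]
  split_ifs <;> ring

lemma br_trd (m : ℕ) (v w : (Fin 4 → ℝ) × (Fin (2 * m) → ℝ) × ℝ) :
    (glHeisBr m v w).2.2 = Sfm m v.2.1 w.2.1 - 2 * (v.1 1 * w.2.2 - w.1 1 * v.2.2) := rfl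

lemma br_fst_one (m : ℕ) (v w : (Fin 4 → ℝ) × (Fin (2 * m) → ℝ) × ℝ) :
    (glHeisBr m v w).1 1 = 0 := rfl

lemma Aop_sub (m : ℕ) (a : Fin 4 → ℝ) (f g : Fin (2 * m) → ℝ) :
    Aop m a (f - g) = Aop m a f - Aop m a g := by
  funext k
  simp only [Aop, Pi.sub_apply]
  split_ifs <;> ring

lemma Aop_rep (m : ℕ) (u v : (Fin 4 → ℝ) × (Fin (2 * m) → ℝ) × ℝ) (x : Fin (2 * m) → ℝ) :
    Aop m (glHeisBr m u v).1 x
      = Aop m u.1 (Aop m v.1 x) - Aop m v.1 (Aop m u.1 x) := by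
  have hβ0 : (glHeisBr m u v).1 0 = -2 * (u.1 2 * v.1 0 - u.1 0 * v.1 2) := rfl
  have hβ1 : (glHeisBr m u v).1 1 = 0 := rfl
  have hβ2 : (glHeisBr m u v).1 2 = u.1 3 * v.1 0 - u.1 0 * v.1 3 := rfl
  have hβ3 : (glHeisBr m u v).1 3 = 2 * (u.1 2 * v.1 3 - u.1 3 * v.1 2) := rfl
  funext k
  rw [Pi.sub_apply,
      ← Eext_pos (Aop m (glHeisBr m u v).1 x) k,
      ← Eext_pos (Aop m u.1 (Aop m v.1 x)) k,
      ← Eext_pos (Aop m v.1 (Aop m u.1 x)) k]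
  simp only [Eext_Aop, Nat.add_sub_cancel,
    show k.1 + 1 + 1 = k.1 + 2 from rfl,
    show ∀ t : ℕ, t + 2 - 1 = t + 1 from fun _ => rfl,
    hβ0, hβ1, hβ2, hβ3]
  simp only [if_pos (show k.1 ≤ 2 * m by omega), if_pos (show k.1 + 1 ≤ 2 * m from k.isLt)]
  by_cases hc : k.1 + 2 ≤ 2 * m
  · simp only [if_pos hc]
    push_cast
    ring
  · simp only [if_neg hc]
    have z1 : ∀ x' : Fin (2 * m) → ℝ, Eext (2 * m) x' (k.1 + 2) = 0 :=
      fun x' => Eext_large _ _ (by omega)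
    have z2 : ∀ x' : Fin (2 * m) → ℝ, Eext (2 * m) x' (k.1 + 2 + 1) = 0 :=
      fun x' => Eext_large _ _ (by omega)
    simp only [z1, z2]
    have hc2 : ((k.1 : ℕ) : ℝ) = 2 * (m : ℝ) - 1 := by
      have hk1 : k.1 = 2 * m - 1 := by omega
      rw [hk1, Nat.cast_sub (by omega)]; push_cast; ring
    push_cast
    rw [hc2]
    ring

lemma Aop_zero_right (m : ℕ) (a : Fin 4 → ℝ) : Aop m a 0 = 0 := by
  funext k; simp [Aop]

lemma Aop_zero_left (m : ℕ) (x : Fin (2 * m) → ℝ) : Aop m 0 x = 0 := by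
  funext k; simp [Aop]

lemma Sfm_zero_left (m : ℕ) (y : Fin (2 * m) → ℝ) : Sfm m 0 y = 0 := by
  simp [Sfm]

lemma Sfm_sub_left (m : ℕ) (f g z : Fin (2 * m) → ℝ) :
    Sfm m (f - g) z = Sfm m f z - Sfm m g z := by
  simp only [Sfm, Pi.sub_apply, sub_mul, mul_sub]
  rw [Finset.sum_sub_distrib]

lemma br_fst_zero (m : ℕ) (u v : (Fin 4 → ℝ) × (Fin (2 * m) → ℝ) × ℝ)
    (hu : u.1 = 0) (hv : v.1 = 0) : (glHeisBr m u v).1 = 0 := by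
  funext i; fin_cases i <;> simp [glHeisBr, hu, hv]

set_option maxHeartbeats 2000000 in
/-- The bracket `glHeisBr` is bilinear, skew-symmetric and satisfies the Jacobi identity;
the span of `h, g₀, g₁, g₂` is a subalgebra isomorphic to 𝔤𝔩(2,ℝ), the span of
`ε₁,…,ε_{2m}, η` is an ideal on which the bracket is the Heisenberg bracket (so that it is
isomorphic to the Heisenberg algebra 𝔫_{2m+1}, in particular two-step nilpotent), and the
whole algebra is the semidirect sum of the two. -/
theorem glHeisBr_semidirect (m : ℕ) (hm : 2 ≤ m) :
    (∀ v, IsLinearMap ℝ (glHeisBr m v)) ∧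
    (∀ v w, glHeisBr m v w = -glHeisBr m w v) ∧
    (∀ u v w,
      glHeisBr m (glHeisBr m u v) w + glHeisBr m (glHeisBr m v w) u
        + glHeisBr m (glHeisBr m w u) v = 0) ∧
    (∀ v w : (Fin 4 → ℝ) × (Fin (2 * m) → ℝ) × ℝ,
      v.2 = 0 → w.2 = 0 → (glHeisBr m v w).2 = 0) ∧
    (∃ φ : (Fin 4 → ℝ) → Matrix (Fin 2) (Fin 2) ℝ,
      IsLinearMap ℝ φ ∧ Function.Bijective φ ∧
      ∀ a b : Fin 4 → ℝ,
        φ ((glHeisBr m (a, 0, 0) (b, 0, 0)).1) = φ a * φ b - φ b * φ a) ∧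
    (∀ v w : (Fin 4 → ℝ) × (Fin (2 * m) → ℝ) × ℝ, w.1 = 0 → (glHeisBr m v w).1 = 0) ∧
    (∀ u v : (Fin 4 → ℝ) × (Fin (2 * m) → ℝ) × ℝ, u.1 = 0 → v.1 = 0 →
      glHeisBr m u v = (0, 0, ∑ i : Fin (2 * m), (-1 : ℝ) ^ (i : ℕ) * u.2.1 i * v.2.1 i.rev)) ∧
    (∀ u v w : (Fin 4 → ℝ) × (Fin (2 * m) → ℝ) × ℝ, u.1 = 0 → v.1 = 0 → w.1 = 0 →
      glHeisBr m (glHeisBr m u v) w = 0) := by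
  refine ⟨?_, ?_, ?_, ?_, ?_, ?_, ?_, ?_⟩
  · -- linearity
    intro v
    constructor
    · intro w w'
      refine Prod.ext ?_ (Prod.ext ?_ ?_)
      · funext i
        fin_cases i <;> simp [glHeisBr, Prod.fst_add, Pi.add_apply] <;> ring
      · funext k
        simp only [glHeisBr, Prod.fst_add, Prod.snd_add, Pi.add_apply]
        split_ifs <;> ring
      · simp only [glHeisBr, Prod.fst_add, Prod.snd_add, Pi.add_apply, mul_add]
        rw [Finset.sum_add_distrib]
        ring
    · intro c w
      refine Prod.ext ?_ (Prod.ext ?_ ?_)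
      · funext i
        fin_cases i <;>
          simp [glHeisBr, Prod.smul_fst, Prod.smul_snd, Pi.smul_apply, smul_eq_mul] <;> ring
      · funext k
        simp only [glHeisBr, Prod.smul_fst, Prod.smul_snd, Pi.smul_apply, smul_eq_mul]
        split_ifs <;> ring
      · simp only [glHeisBr, Prod.smul_fst, Prod.smul_snd, Pi.smul_apply, smul_eq_mul]
        have hs : ∑ x : Fin (2 * m), (-1 : ℝ) ^ (x : ℕ) * v.2.1 x * (c * w.2.1 x.rev)
            = c * ∑ i : Fin (2 * m), (-1 : ℝ) ^ (i : ℕ) * v.2.1 i * w.2.1 i.rev := by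
          rw [Finset.mul_sum]
          exact Finset.sum_congr rfl fun i _ => by ring
        rw [hs]
        ring
  · -- skew-symmetry
    intro v w
    refine Prod.ext ?_ (Prod.ext ?_ ?_)
    · funext i
      fin_cases i <;> simp [glHeisBr, Prod.fst_neg, Pi.neg_apply] <;> ring
    · funext k
      simp only [glHeisBr, Prod.fst_neg, Prod.snd_neg, Pi.neg_apply]
      split_ifs <;> ring
    · simp only [glHeisBr, Prod.fst_neg, Prod.snd_neg, Pi.neg_apply]
      linear_combination S_antisym m v.2.1 w.2.1
  · -- Jacobi
    intro u v w
    refine Prod.ext ?_ (Prod.ext ?_ ?_)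
    · funext i
      fin_cases i <;> simp [glHeisBr, Prod.fst_add, Pi.add_apply] <;> ring
    · simp only [Prod.snd_add, Prod.fst_add, br_snd, Aop_sub, Aop_rep, Prod.snd_zero,
        Prod.fst_zero]
      abel
    · simp only [Prod.snd_add, br_trd, br_snd, br_fst_one, Sfm_sub_left, Prod.snd_zero]
      have h1 := S_inv m u.1 v.2.1 w.2.1
      have h2 := S_inv m v.1 w.2.1 u.2.1
      have h3 := S_inv m w.1 u.2.1 v.2.1
      have e1 := S_antisym m v.2.1 (Aop m u.1 w.2.1)
      have e2 := S_antisym m w.2.1 (Aop m v.1 u.2.1)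
      have e3 := S_antisym m u.2.1 (Aop m w.1 v.2.1)
      linear_combination h1 + h2 + h3 - e1 - e2 - e3
  · -- ideal: bracket of two gl-part-only elements has zero nilpotent part
    intro v w hv hw
    have h1 : v.2.1 = 0 := by rw [hv]; rfl
    have h2 : w.2.1 = 0 := by rw [hw]; rfl
    have h3 : v.2.2 = 0 := by rw [hv]; rfl
    have h4 : w.2.2 = 0 := by rw [hw]; rfl
    refine Prod.ext ?_ ?_
    · rw [br_snd, h1, h2, Aop_zero_right, Aop_zero_right, sub_zero]
      rfl
    · rw [br_trd, h1, h3, h4, Sfm_zero_left]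
      simp
  · -- gl(2,R)
    refine ⟨fun a => !![a 2 + a 1, a 3; a 0, a 1 - a 2], ⟨?_, ?_⟩, ?_, ?_⟩
    · intro a b
      ext i j
      fin_cases i <;> fin_cases j <;> simp [Matrix.add_apply, Pi.add_apply] <;> ring
    · intro c a
      ext i j
      fin_cases i <;> fin_cases j <;>
        simp [Matrix.smul_apply, Pi.smul_apply, smul_eq_mul] <;> ring
    · rw [Function.bijective_iff_has_inverse]
      refine ⟨fun M => ![M 1 0, (M 0 0 + M 1 1) / 2, (M 0 0 - M 1 1) / 2, M 0 1], ?_, ?_⟩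
      · intro a
        funext i
        fin_cases i <;> simp <;> ring
      · intro M
        ext i j
        fin_cases i <;> fin_cases j <;> simp <;> ring
    · intro a b
      have h : (glHeisBr m (a, 0, 0) (b, 0, 0)).1
          = ![-2 * (a 2 * b 0 - a 0 * b 2), 0, a 3 * b 0 - a 0 * b 3,
              2 * (a 2 * b 3 - a 3 * b 2)] := rfl
      rw [h]
      ext i j
      fin_cases i <;> fin_cases j <;>
        simp [Matrix.mul_apply, Matrix.sub_apply, Fin.sum_univ_two] <;> ring
  · -- subalgebra
    intro v w hw
    funext i
    fin_cases i <;> simp [glHeisBr, hw]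
  · -- Heisenberg bracket on the ideal
    intro u v hu hv
    refine Prod.ext ?_ (Prod.ext ?_ ?_)
    · exact br_fst_zero m u v hu hv
    · rw [br_snd, hu, hv, Aop_zero_left, Aop_zero_left, sub_zero]
    · rw [br_trd, hu, hv]
      simp
  · -- two-step nilpotency of the ideal
    intro u v w hu hv hw
    refine Prod.ext ?_ (Prod.ext ?_ ?_)
    · exact br_fst_zero m _ w (br_fst_zero m u v hu hv) hw
    · rw [br_snd, hw, Aop_zero_left, br_fst_zero m u v hu hv, Aop_zero_left]
      simp
    · rw [br_trd, br_snd, hu, hv, Aop_zero_left, Aop_zero_left, sub_zero, Sfm_zero_left,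
        br_fst_one, hw]
      simp
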